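/- Let A be an integer d×n matrix with columns a_1, …, a_n ∈ ℤ^d spanning ℤ^d as a group and such that the cone C = ℝ_{≥0}a_1 + ⋯ + ℝ_{≥0}a_n satisfies C ∩ (−C) = {0}. Let ρ : ker A → ℂˣ be a group homomorphism and I_{A,ρ} ⊆ ℂ[x_1,…,x_n] the ideal generated by the binomials x^u − ρ(u−v)·x^v over all u, v ∈ ℕ^n with u − v ∈ ker A. If 𝔭 ⊆ ℂ[x_1,…,x_n] is a prime ideal that contains I_{A,ρ} and is homogeneous with respect to the ℤ^d-grading given by deg(x_j) = a_j, then there exist a subset σ ⊆ {1,…,n} and a linear functional φ : ℝ^d → ℝ with φ(a_j) = 0 for all j ∈ σ and φ(a_j) > 0 for all j ∉ σ, such that 𝔭 equals the sum of I_{A,ρ} and the ideal generated by the variables {x_j : j ∉ σ}. -/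

import Mathlib

open Finset Matrix Submodule

private lemma LI_cast {k s : ℕ} (v : Fin s → (Fin k → ℚ)) (hv : LinearIndependent ℚ v) :
    LinearIndependent ℝ (fun i => (fun j => ((v i j : ℝ)) : Fin k → ℝ)) := by
  rw [Fintype.linearIndependent_iff] at hv ⊢
  set V : Matrix (Fin s) (Fin k) ℚ := Matrix.of v with hV
  set G : Matrix (Fin s) (Fin s) ℚ := V * Vᵀ with hG
  have hdet : G.det ≠ 0 := by
    intro h0
    obtain ⟨c, hc0, hcm⟩ := (Matrix.exists_mulVec_eq_zero_iff).2 h0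
    have hw : Vᵀ *ᵥ c = 0 := by
      have hd : (Vᵀ *ᵥ c) ⬝ᵥ (Vᵀ *ᵥ c) = 0 := by
        have : c ⬝ᵥ (G *ᵥ c) = 0 := by rw [hcm]; simp
        rw [hG, ← Matrix.mulVec_mulVec, Matrix.dotProduct_mulVec, ← Matrix.mulVec_transpose] at this
        exact this
      exact dotProduct_self_eq_zero.1 hd
    have : ∀ i, c i = 0 := by
      apply hv
      funext j
      have := congrFun hw j
      simp only [Matrix.mulVec, dotProduct, Matrix.transpose_apply, Pi.zero_apply, hV] at this
      simpa [Finset.sum_apply, mul_comm] using this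
    exact hc0 (funext this)
  intro c hc
  set Vr : Matrix (Fin s) (Fin k) ℝ := V.map (fun q : ℚ => (q : ℝ)) with hVr
  have hw : Vrᵀ *ᵥ c = 0 := by
    funext j
    have := congrFun hc j
    simp only [Finset.sum_apply, Pi.smul_apply, smul_eq_mul, Pi.zero_apply] at this
    simp only [Matrix.mulVec, dotProduct, Matrix.transpose_apply, Matrix.map_apply,
      Pi.zero_apply, hVr, hV]
    simpa [mul_comm] using this
  have hGr : (G.map (fun q : ℚ => (q : ℝ))) *ᵥ c = 0 := by
    have hmm : G.map (fun q : ℚ => (q : ℝ)) = Vr * Vrᵀ := by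
      rw [hG, hVr]
      rw [show (fun q : ℚ => (q : ℝ)) = ⇑(Rat.castHom ℝ) from rfl]
      rw [Matrix.map_mul]
      congr 1
    rw [hmm, ← Matrix.mulVec_mulVec, hw, Matrix.mulVec_zero]
  by_contra hci
  push_neg at hci
  obtain ⟨i0, hi0⟩ := hci
  have hc0 : c ≠ 0 := fun h => hi0 (by rw [h]; rfl)
  have hz : (G.map (fun q : ℚ => (q : ℝ))).det = 0 :=
    (Matrix.exists_mulVec_eq_zero_iff).1 ⟨c, hc0, hGr⟩
  have hcast : ((G.det : ℚ) : ℝ) = 0 := by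
    rw [← hz, show (G.map fun q : ℚ => (q : ℝ)) = (Rat.castHom ℝ).mapMatrix G from rfl,
      ← RingHom.map_det]
    rfl
  exact hdet (by exact_mod_cast hcast)

private lemma rat_approx_solution {m k : ℕ} (M : Matrix (Fin m) (Fin k) ℚ) (x : Fin k → ℝ)
    (hx : ∀ i, ∑ j, (M i j : ℝ) * x j = 0) {ε : ℝ} (hε : 0 < ε) :
    ∃ q : Fin k → ℚ, (∀ i, ∑ j, M i j * q j = 0) ∧ ∀ j, |(q j : ℝ) - x j| < ε := by
  classical
  set Mr : Matrix (Fin m) (Fin k) ℝ := M.map (fun q : ℚ => (q : ℝ)) with hMr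
  set Kq : Submodule ℚ (Fin k → ℚ) := LinearMap.ker M.mulVecLin with hKq
  set Kr : Submodule ℝ (Fin k → ℝ) := LinearMap.ker Mr.mulVecLin with hKr
  set s : ℕ := Module.finrank ℚ Kq with hs
  set b : Module.Basis (Fin s) ℚ Kq := Module.finBasis ℚ Kq with hb
  set bv : Fin s → (Fin k → ℚ) := fun i => (b i : Fin k → ℚ) with hbv
  have hbvli : LinearIndependent ℚ bv :=
    b.linearIndependent.map' Kq.subtype (Submodule.ker_subtype _)
  set bvr : Fin s → (Fin k → ℝ) := fun i => (fun j => ((bv i j : ℝ))) with hbvr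
  have hbvrli : LinearIndependent ℝ bvr := LI_cast bv hbvli
  have hmemKq : ∀ i, bv i ∈ Kq := fun i => (b i).2
  have hmemKr : ∀ i, bvr i ∈ Kr := by
    intro i
    rw [hKr, LinearMap.mem_ker]
    funext l
    have h1 : M *ᵥ (bv i) = 0 := hmemKq i
    have h2 := congrFun h1 l
    simp only [Matrix.mulVec, dotProduct, Pi.zero_apply] at h2 ⊢
    simp only [Matrix.mulVecLin_apply, Matrix.mulVec, dotProduct, hMr, Matrix.map_apply,
      hbvr, Pi.zero_apply]
    have : ((∑ j, M l j * bv i j : ℚ) : ℝ) = 0 := by rw [h2]; norm_num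
    push_cast at this
    convert this using 1
  -- rank of M does not drop when casting to ℝ
  have hrank : M.rank ≤ Mr.rank := by
    obtain ⟨t, hts, htspan, htli⟩ := exists_linearIndependent ℚ (Set.range M)
    have htfin : t.Finite := (Set.finite_range M).subset hts
    have : Fintype t := htfin.fintype
    have hcard : M.rank = Fintype.card t := by
      rw [Matrix.rank_eq_finrank_span_row, show Set.range M.row = Set.range M from rfl, ← htspan, finrank_span_set_eq_card htli,
        Set.toFinset_card]
    set e : Fin (Fintype.card t) ≃ t := (Fintype.equivFin t).symm with he
    set vt : Fin (Fintype.card t) → (Fin k → ℚ) := fun i => ((e i : t) : Fin k → ℚ) with hvt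
    have hvtli : LinearIndependent ℚ vt := htli.comp e e.injective
    have hvtrli : LinearIndependent ℝ (fun i => (fun j => ((vt i j : ℝ)) : Fin k → ℝ)) :=
      LI_cast vt hvtli
    set RS : Submodule ℝ (Fin k → ℝ) := Submodule.span ℝ (Set.range Mr) with hRS
    have hmem : ∀ i, (fun j => ((vt i j : ℝ)) : Fin k → ℝ) ∈ RS := by
      intro i
      obtain ⟨i0, hi0⟩ := hts (e i).2
      apply Submodule.subset_span
      exact ⟨i0, by funext j; simp [hMr, Matrix.map_apply, ← hi0, hvt]⟩
    set vtR : Fin (Fintype.card t) → RS := fun i => ⟨_, hmem i⟩ with hvtR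
    have hvtRli : LinearIndependent ℝ vtR :=
      hvtrli.of_comp RS.subtype
    have hle : Fintype.card t ≤ Module.finrank ℝ RS := by
      simpa using hvtRli.fintype_card_le_finrank
    rw [hcard, Matrix.rank_eq_finrank_span_row Mr]
    exact hle
  -- dimension count
  have hrn1 : M.rank + Module.finrank ℚ Kq = k := by
    have := LinearMap.finrank_range_add_finrank_ker M.mulVecLin
    rwa [Module.finrank_pi, Fintype.card_fin] at this
  have hrn2 : Mr.rank + Module.finrank ℝ Kr = k := by
    have := LinearMap.finrank_range_add_finrank_ker Mr.mulVecLin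
    rwa [Module.finrank_pi, Fintype.card_fin] at this
  have hKrle : Module.finrank ℝ Kr ≤ s := by omega
  have hspan : Submodule.span ℝ (Set.range bvr) = Kr := by
    apply Submodule.eq_of_le_of_finrank_le
    · rw [Submodule.span_le, Set.range_subset_iff]
      exact hmemKr
    · rw [finrank_span_eq_card hbvrli, Fintype.card_fin]
      exact hKrle
  have hxKr : x ∈ Kr := by
    rw [hKr, LinearMap.mem_ker]
    funext i
    simp only [Matrix.mulVecLin_apply, Matrix.mulVec, dotProduct, hMr, Matrix.map_apply,
      Pi.zero_apply]
    exact hx i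
  rw [← hspan] at hxKr
  obtain ⟨tc, htc⟩ := (mem_span_range_iff_exists_fun ℝ).1 hxKr
  -- rational approximation of the coefficients
  set C : ℝ := 1 + ∑ i, ∑ j, |(bv i j : ℝ)| with hC
  have hCpos : 0 < C := by
    have : (0:ℝ) ≤ ∑ i, ∑ j, |(bv i j : ℝ)| :=
      Finset.sum_nonneg fun i _ => Finset.sum_nonneg fun j _ => abs_nonneg _
    linarith
  have hδ : 0 < ε / C := div_pos hε hCpos
  have hchoice : ∀ i : Fin s, ∃ q : ℚ, |tc i - (q:ℝ)| < ε / C := fun i => exists_rat_near (tc i) hδ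
  choose tq htq using hchoice
  refine ⟨fun j => ∑ i, tq i * bv i j, ?_, ?_⟩
  · intro i
    have hmem : (∑ i, tq i • bv i) ∈ Kq := by
      apply Submodule.sum_mem
      intro i0 _
      exact Submodule.smul_mem _ _ (hmemKq i0)
    rw [hKq, LinearMap.mem_ker] at hmem
    have := congrFun hmem i
    simp only [Matrix.mulVecLin_apply, Matrix.mulVec, dotProduct, Pi.zero_apply,
      Finset.sum_apply, Pi.smul_apply, smul_eq_mul] at this
    rw [← this]
  · intro j
    have hxj : x j = ∑ i, tc i * bv i j := by
      rw [← htc]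
      simp [Finset.sum_apply, hbvr]
    have hqj : ((∑ i, tq i * bv i j : ℚ) : ℝ) = ∑ i, (tq i : ℝ) * (bv i j : ℝ) := by push_cast; rfl
    rw [hqj, hxj, ← Finset.sum_sub_distrib]
    have hb1 : ∀ i : Fin s, |(tq i : ℝ) * (bv i j : ℝ) - tc i * (bv i j : ℝ)|
        ≤ (ε / C) * |(bv i j : ℝ)| := by
      intro i
      rw [← sub_mul, abs_mul]
      apply mul_le_mul_of_nonneg_right _ (abs_nonneg _)
      rw [abs_sub_comm]
      exact le_of_lt (htq i)
    calc |∑ i, ((tq i : ℝ) * (bv i j : ℝ) - tc i * (bv i j : ℝ))|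
        ≤ ∑ i, |(tq i : ℝ) * (bv i j : ℝ) - tc i * (bv i j : ℝ)| := Finset.abs_sum_le_sum_abs _ _
      _ ≤ ∑ i, (ε / C) * |(bv i j : ℝ)| := Finset.sum_le_sum (fun i _ => hb1 i)
      _ = (ε / C) * ∑ i, |(bv i j : ℝ)| := by rw [Finset.mul_sum]
      _ < (ε / C) * C := by
          apply mul_lt_mul_of_pos_left _ hδ
          rw [hC]
          have h2 : ∑ i, |(bv i j : ℝ)| ≤ ∑ i, ∑ j2, |(bv i j2 : ℝ)| :=
            Finset.sum_le_sum (fun i _ => Finset.single_le_sum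
              (fun j2 (_ : j2 ∈ Finset.univ) => abs_nonneg ((bv i j2 : ℝ))) (Finset.mem_univ j))
          linarith
      _ = ε := div_mul_cancel₀ ε (ne_of_gt hCpos)

open Pointwise in
private lemma sep_lemma {d n : ℕ} (va : Fin n → (Fin d → ℝ)) (σ : Finset (Fin n))
    (H : ¬ ∃ (c μ : Fin n → ℝ), (∀ j, 0 ≤ c j) ∧ (∀ j ∈ σ, c j = 0) ∧ (∑ j, c j = 1) ∧
      (∀ j ∉ σ, μ j = 0) ∧ (∑ j, c j • va j) + (∑ j, μ j • va j) = 0) :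
    ∃ φ : (Fin d → ℝ) →ₗ[ℝ] ℝ, (∀ j ∈ σ, φ (va j) = 0) ∧ (∀ j ∉ σ, 0 < φ (va j)) := by
  classical
  by_cases hns : ∃ j, j ∉ σ
  swap
  · push_neg at hns
    exact ⟨0, fun j _ => rfl, fun j hj => absurd (hns j) hj⟩
  obtain ⟨j₀, hj₀⟩ := hns
  set S1 : Set (Fin d → ℝ) := va '' {j | j ∉ σ} with hS1
  set W : Submodule ℝ (Fin d → ℝ) := Submodule.span ℝ (va '' {j | j ∈ σ}) with hW
  set K : Set (Fin d → ℝ) := convexHull ℝ S1 + (W : Set (Fin d → ℝ)) with hK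
  set Kc : Set (Fin d → ℝ) := {x | ∃ c : Fin n → ℝ, (∀ j, 0 ≤ c j) ∧ (∀ j ∈ σ, c j = 0) ∧
      (∑ j, c j = 1) ∧ (∑ j, c j • va j) = x} with hKc
  have hKcConvex : Convex ℝ Kc := by
    rintro x ⟨c, hc0, hcσ, hc1, rfl⟩ y ⟨c', hc'0, hc'σ, hc'1, rfl⟩ p q hp hq hpq
    refine ⟨fun j => p * c j + q * c' j, ?_, ?_, ?_, ?_⟩
    · intro j; dsimp only
      exact add_nonneg (mul_nonneg hp (hc0 j)) (mul_nonneg hq (hc'0 j))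
    · intro j hj; dsimp only; rw [hcσ j hj, hc'σ j hj]; ring
    · dsimp only
      rw [Finset.sum_add_distrib, ← Finset.mul_sum, ← Finset.mul_sum, hc1, hc'1]; linarith
    · dsimp only
      simp only [add_smul, mul_smul, Finset.sum_add_distrib, ← Finset.smul_sum]
  have hhullKc : convexHull ℝ S1 ⊆ Kc := by
    apply convexHull_min _ hKcConvex
    rintro x ⟨j, hj, rfl⟩
    refine ⟨fun l => if l = j then 1 else 0, ?_, ?_, ?_, ?_⟩
    · intro l; dsimp only; split <;> norm_num
    · intro l hl
      have hlj : l ≠ j := fun h => hj (h ▸ hl)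
      simp [hlj]
    · simp
    · simp [Finset.sum_ite_eq']
  have hWc : ∀ w ∈ W, ∃ μ : Fin n → ℝ, (∀ j ∉ σ, μ j = 0) ∧ (∑ j, μ j • va j) = w := by
    intro w hw
    set Wc : Submodule ℝ (Fin d → ℝ) := {
      carrier := {x | ∃ μ : Fin n → ℝ, (∀ j ∉ σ, μ j = 0) ∧ (∑ j, μ j • va j) = x}
      add_mem' := by
        rintro x y ⟨μ, hμ, rfl⟩ ⟨ν, hν, rfl⟩
        refine ⟨fun j => μ j + ν j, fun j hj => by dsimp only; rw [hμ j hj, hν j hj]; ring, ?_⟩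
        simp only [add_smul, Finset.sum_add_distrib]
      zero_mem' := ⟨0, fun j _ => rfl, by simp⟩
      smul_mem' := by
        rintro t x ⟨μ, hμ, rfl⟩
        refine ⟨fun j => t * μ j, fun j hj => by dsimp only; rw [hμ j hj]; ring, ?_⟩
        simp only [mul_smul, ← Finset.smul_sum]
    } with hWcdef
    have hle : W ≤ Wc := by
      rw [hW, Submodule.span_le]
      rintro x ⟨j, hj, rfl⟩
      exact ⟨fun l => if l = j then 1 else 0,
        fun l hl => by
          have hlj : l ≠ j := fun h => hl (h ▸ hj)
          simp [hlj],
        by simp [Finset.sum_ite_eq']⟩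
    exact hle hw
  have h0K : (0 : Fin d → ℝ) ∉ K := by
    intro h0
    rw [hK] at h0
    obtain ⟨p, hp, w, hwmem, hpw⟩ := Set.mem_add.1 h0
    obtain ⟨c, hc0, hcσ, hc1, hcp⟩ := hhullKc hp
    obtain ⟨μ, hμσ, hμw⟩ := hWc w hwmem
    exact H ⟨c, μ, hc0, hcσ, hc1, hμσ, by rw [hcp, hμw]; exact hpw⟩
  have hKconvex : Convex ℝ K :=
    (convex_convexHull ℝ S1).add W.convex
  have hKclosed : IsClosed K := by
    rw [hK]
    apply IsClosed.add_left_of_isCompact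
    · exact W.closed_of_finiteDimensional
    · apply Set.Finite.isCompact_convexHull
      exact (Set.finite_range va).subset (Set.image_subset_range _ _)
  obtain ⟨f, u, hfu, hfK⟩ := geometric_hahn_banach_point_closed hKconvex hKclosed h0K
  have hf0 : f 0 = 0 := map_zero f
  have hu : 0 < u := by rw [← hf0]; exact hfu
  have hmemK : ∀ j ∉ σ, ∀ w ∈ W, va j + w ∈ K := by
    intro j hj w hw
    rw [hK]
    exact Set.add_mem_add (subset_convexHull ℝ S1 ⟨j, hj, rfl⟩) hw
  have hfW : ∀ w ∈ W, f w = 0 := by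
    intro w hw
    by_contra hne
    set t : ℝ := (u - 1 - f (va j₀)) / f w with ht
    have h1 : va j₀ + t • w ∈ K := hmemK j₀ hj₀ _ (W.smul_mem t hw)
    have h2 := hfK _ h1
    rw [map_add, f.map_smul, smul_eq_mul, ht, div_mul_cancel₀ _ hne] at h2
    linarith
  refine ⟨f.toLinearMap, ?_, ?_⟩
  · intro j hj
    exact hfW _ (Submodule.subset_span ⟨j, hj, rfl⟩)
  · intro j hj
    have hm : va j + 0 ∈ K := hmemK j hj 0 W.zero_mem
    rw [add_zero] at hm
    have := hfK _ hm
    simp only [ContinuousLinearMap.coe_coe]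
    linarith

private lemma clear_denom {n : ℕ} (r : Fin n → ℚ) :
    ∃ N : ℕ, 0 < N ∧ ∃ z : Fin n → ℤ, ∀ j, (z j : ℚ) = (N : ℚ) * r j := by
  refine ⟨∏ l, (r l).den, Finset.prod_pos (fun l _ => (r l).pos),
    fun j => (∏ l ∈ Finset.univ.erase j, ((r l).den : ℤ)) * (r j).num, fun j => ?_⟩
  have h1 : (∏ l, ((r l).den : ℚ)) = ((r j).den : ℚ) * ∏ l ∈ Finset.univ.erase j, ((r l).den : ℚ) :=
    (Finset.mul_prod_erase _ _ (Finset.mem_univ j)).symm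
  push_cast
  rw [h1, mul_comm (((r j).den : ℚ)), mul_assoc, Rat.den_mul_eq_num]

private lemma mono_notmem {n : ℕ} (𝔭 : Ideal (MvPolynomial (Fin n) ℂ)) (hp : 𝔭.IsPrime)
    (u : Fin n → ℕ) (h : ∀ j, u j ≠ 0 → MvPolynomial.X j ∉ 𝔭) :
    (∏ j, MvPolynomial.X j ^ u j : MvPolynomial (Fin n) ℂ) ∉ 𝔭 := by
  haveI := hp
  intro hmem
  rw [Ideal.IsPrime.prod_mem_iff] at hmem
  obtain ⟨j, -, hj⟩ := hmem
  rcases Nat.eq_zero_or_pos (u j) with h0 | hpos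
  · rw [h0, pow_zero] at hj
    exact hp.ne_top ((Ideal.eq_top_iff_one _).2 hj)
  · exact h j (Nat.pos_iff_ne_zero.1 hpos) (hp.mem_of_pow_mem _ hj)

private lemma unit_smul_mem {n : ℕ} (𝔭 : Ideal (MvPolynomial (Fin n) ℂ)) (hp : 𝔭.IsPrime)
    (c : ℂ) (hc : c ≠ 0) (p : MvPolynomial (Fin n) ℂ) (h : c • p ∈ 𝔭) : p ∈ 𝔭 := by
  rw [MvPolynomial.smul_eq_C_mul] at h
  rcases hp.mem_or_mem h with hC | hpmem
  · exact absurd (Ideal.eq_top_of_isUnit_mem _ hC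
      (IsUnit.map (MvPolynomial.C : ℂ →+* MvPolynomial (Fin n) ℂ) (isUnit_iff_ne_zero.2 hc)))
      hp.ne_top
  · exact hpmem

private lemma prod_X_pow_univ {n : ℕ} (e : Fin n →₀ ℕ) :
    (∏ j, MvPolynomial.X j ^ e j : MvPolynomial (Fin n) ℂ) = MvPolynomial.monomial e 1 := by
  rw [← MvPolynomial.prod_X_pow_eq_monomial]
  exact (Finset.prod_subset (Finset.subset_univ _) (fun j _ hj => by
    rw [Finsupp.notMem_support_iff.1 hj, pow_zero])).symm


/-- Let `a₁, …, aₙ ∈ ℤ^d` span `ℤ^d` as a group and generate a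
pointed cone `C` (`C ∩ −C = {0}`). Let `ρ` be a character on `ker A` and `I_{A,ρ}`
the twisted toric ideal. If `𝔭` is a prime ideal containing `I_{A,ρ}` which is
homogeneous for the `ℤ^d`-grading `deg xⱼ = aⱼ`, then there are a subset
`σ ⊆ {1,…,n}` and a linear functional `φ : ℝ^d → ℝ` vanishing on `{aⱼ : j ∈ σ}` and
strictly positive on `{aⱼ : j ∉ σ}` such that `𝔭 = I_{A,ρ} + ⟨xⱼ : j ∉ σ⟩`. -/
theorem stmt_11 {d n : ℕ} (a : Fin n → (Fin d → ℤ))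
    (hspan : AddSubgroup.closure (Set.range a) = ⊤)
    (hpointed : ∀ c c' : Fin n → ℝ, (∀ j, 0 ≤ c j) → (∀ j, 0 ≤ c' j) →
      (∑ j, c j • (fun i => (a j i : ℝ))) + (∑ j, c' j • (fun i => (a j i : ℝ))) = 0 →
      (∑ j, c j • (fun i => (a j i : ℝ))) = 0)
    (ρ : (Fin n → ℤ) → ℂˣ)
    (hρ0 : ρ 0 = 1)
    (hρ : ∀ w w' : Fin n → ℤ, (∑ j, w j • a j) = 0 → (∑ j, w' j • a j) = 0 →
      ρ (w + w') = ρ w * ρ w')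
    (I : Ideal (MvPolynomial (Fin n) ℂ))
    (hI : I = Ideal.span { f : MvPolynomial (Fin n) ℂ | ∃ u v : Fin n → ℕ,
      (∑ j, ((u j : ℤ) - (v j : ℤ)) • a j) = 0 ∧
      f = (∏ j, MvPolynomial.X j ^ u j) -
        ((ρ (fun j => (u j : ℤ) - (v j : ℤ)) : ℂ)) • ∏ j, MvPolynomial.X j ^ v j })
    (𝔭 : Ideal (MvPolynomial (Fin n) ℂ)) (hprime : 𝔭.IsPrime)
    (hsub : I ≤ 𝔭)
    (hhom : ∃ G : Set (MvPolynomial (Fin n) ℂ), 𝔭 = Ideal.span G ∧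
      ∀ g ∈ G, ∃ b : Fin d → ℤ, ∀ e ∈ g.support, (∑ j, (e j : ℤ) • a j) = b) :
    ∃ (σ : Finset (Fin n)) (φ : (Fin d → ℝ) →ₗ[ℝ] ℝ),
      (∀ j ∈ σ, φ (fun i => (a j i : ℝ)) = 0) ∧
      (∀ j ∉ σ, 0 < φ (fun i => (a j i : ℝ))) ∧
      𝔭 = I + Ideal.span (MvPolynomial.X '' {j : Fin n | j ∉ σ}) := by
  classical
  set va : Fin n → (Fin d → ℝ) := fun j => (fun i => (a j i : ℝ)) with hva
  set σ : Finset (Fin n) := Finset.univ.filter (fun j => MvPolynomial.X j ∉ 𝔭) with hσdef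
  have hσ : ∀ j, j ∈ σ ↔ MvPolynomial.X j ∉ 𝔭 := by
    intro j; simp [hσdef]
  have hσ' : ∀ j : Fin n, j ∉ σ ↔ MvPolynomial.X j ∈ 𝔭 := by
    intro j; rw [hσ]; tauto
  -- the generic ring-theoretic contradiction
  have contra : ∀ (u v : Fin n → ℕ), (∑ j, ((u j : ℤ) - (v j : ℤ)) • a j) = 0 →
      (∃ j₀, j₀ ∉ σ ∧ u j₀ ≠ 0) → (∀ j, v j ≠ 0 → j ∈ σ) → False := by
    rintro u v hrel ⟨j₀, hj₀σ, hj₀u⟩ hv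
    have hbin : ((∏ j, MvPolynomial.X j ^ u j) -
        ((ρ (fun j => (u j : ℤ) - (v j : ℤ)) : ℂ)) • ∏ j, MvPolynomial.X j ^ v j) ∈ 𝔭 :=
      hsub (hI ▸ Ideal.subset_span ⟨u, v, hrel, rfl⟩)
    have hXj₀ : MvPolynomial.X j₀ ∈ 𝔭 := (hσ' j₀).1 hj₀σ
    have hu : (∏ j, MvPolynomial.X j ^ u j : MvPolynomial (Fin n) ℂ) ∈ 𝔭 := by
      rw [← Finset.prod_erase_mul Finset.univ _ (Finset.mem_univ j₀)]
      apply Ideal.mul_mem_left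
      obtain ⟨m, hm⟩ := Nat.exists_eq_succ_of_ne_zero hj₀u
      rw [hm, pow_succ]
      exact Ideal.mul_mem_left _ _ hXj₀
    have hsm : ((ρ (fun j => (u j : ℤ) - (v j : ℤ)) : ℂ)) • (∏ j, MvPolynomial.X j ^ v j) ∈ 𝔭 := by
      have := 𝔭.sub_mem hu hbin
      simpa using this
    have hvmem : (∏ j, MvPolynomial.X j ^ v j : MvPolynomial (Fin n) ℂ) ∈ 𝔭 :=
      unit_smul_mem 𝔭 hprime _ (Units.ne_zero _) _ hsm
    exact mono_notmem 𝔭 hprime v (fun j hj => (hσ j).1 (hv j hj)) hvmem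
  -- no real linear relation
  have H : ¬ ∃ (c μ : Fin n → ℝ), (∀ j, 0 ≤ c j) ∧ (∀ j ∈ σ, c j = 0) ∧ (∑ j, c j = 1) ∧
      (∀ j ∉ σ, μ j = 0) ∧ (∑ j, c j • va j) + (∑ j, μ j • va j) = 0 := by
    rintro ⟨c, μ, hc0, hcσ, hc1, hμσ, hsum⟩
    set S : Finset (Fin n) := Finset.univ.filter (fun j => 0 < c j) with hSdef
    have hSσ : ∀ j ∈ S, j ∉ σ := by
      intro j hj hjσ
      rw [hSdef, Finset.mem_filter] at hj
      exact absurd (hcσ j hjσ) (ne_of_gt hj.2)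
    have hSne : S.Nonempty := by
      by_contra hemp
      rw [Finset.not_nonempty_iff_eq_empty] at hemp
      have : (∑ j, c j) = 0 := Finset.sum_eq_zero (fun j _ => by
        by_contra hne
        have : 0 < c j := lt_of_le_of_ne (hc0 j) (Ne.symm hne)
        have : j ∈ S := by rw [hSdef, Finset.mem_filter]; exact ⟨Finset.mem_univ _, this⟩
        rw [hemp] at this
        exact absurd this (Finset.notMem_empty _))
      rw [hc1] at this
      norm_num at this
    set T : Finset (Fin n) := S ∪ σ with hTdef
    have hcT : ∀ j, j ∉ T → c j = 0 := by
      intro j hj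
      rw [hTdef, Finset.mem_union] at hj
      push_neg at hj
      rcases lt_or_eq_of_le (hc0 j) with h | h
      · exact absurd (by rw [hSdef, Finset.mem_filter]; exact ⟨Finset.mem_univ _, h⟩) hj.1
      · exact h.symm
    have hμT : ∀ j, j ∉ T → μ j = 0 := by
      intro j hj
      rw [hTdef, Finset.mem_union] at hj
      push_neg at hj
      exact hμσ j hj.2
    set M : Matrix (Fin d) (Fin n) ℚ := fun i j => if j ∈ T then (a j i : ℚ) else 0 with hM
    set x : Fin n → ℝ := fun j => c j + μ j with hx
    have hMx : ∀ i, ∑ j, ((M i j : ℚ) : ℝ) * x j = 0 := by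
      intro i
      have h1 := congrFun hsum i
      simp only [Pi.add_apply, Finset.sum_apply, Pi.smul_apply, smul_eq_mul, Pi.zero_apply,
        hva] at h1
      have h2 : ∀ j, ((M i j : ℚ) : ℝ) * x j = c j * (a j i : ℝ) + μ j * (a j i : ℝ) := by
        intro j
        by_cases hj : j ∈ T
        · simp only [hM, hx, if_pos hj]
          push_cast
          ring
        · simp only [hM, hx, if_neg hj, hcT j hj, hμT j hj]
          norm_num
      rw [Finset.sum_congr rfl (fun j _ => h2 j), Finset.sum_add_distrib]
      rw [← h1]
    set ε : ℝ := S.inf' hSne c with hε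
    have hεpos : 0 < ε := by
      rw [hε, Finset.lt_inf'_iff]
      intro j hj
      rw [hSdef, Finset.mem_filter] at hj
      exact hj.2
    obtain ⟨q, hq, happ⟩ := rat_approx_solution M x hMx hεpos
    set r : Fin n → ℚ := fun j => if j ∈ T then q j else 0 with hr
    have hrrel : ∀ i, (∑ j, r j * (a j i : ℚ)) = 0 := by
      intro i
      rw [← hq i]
      apply Finset.sum_congr rfl
      intro j _
      by_cases hj : j ∈ T
      · simp only [hr, hM, if_pos hj]; ring
      · simp only [hr, hM, if_neg hj]; ring
    have hrpos : ∀ j ∈ S, 0 < r j := by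
      intro j hj
      have hjT : j ∈ T := by rw [hTdef]; exact Finset.mem_union_left _ hj
      have hμj : μ j = 0 := hμσ j (hSσ j hj)
      have hcj : ε ≤ c j := Finset.inf'_le _ hj
      have habs := happ j
      rw [abs_lt] at habs
      have : (q j : ℝ) > x j - ε := by linarith [habs.1]
      have hxj : x j = c j := by rw [hx]; dsimp only; rw [hμj]; ring
      have hq0 : (0:ℝ) < (q j : ℝ) := by rw [hxj] at this; linarith
      simp only [hr]
      rw [if_pos hjT]
      exact_mod_cast hq0
    have hrnneg : ∀ j, j ∉ σ → 0 ≤ r j := by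
      intro j hjσ
      by_cases hjS : j ∈ S
      · exact le_of_lt (hrpos j hjS)
      · have : j ∉ T := by
          rw [hTdef, Finset.mem_union]
          push_neg
          exact ⟨hjS, hjσ⟩
        simp only [hr]
        rw [if_neg this]
    obtain ⟨N, hN, z, hz⟩ := clear_denom r
    have hzrel : (∑ j, z j • a j) = 0 := by
      funext i
      have : ((∑ j, z j * a j i : ℤ) : ℚ) = 0 := by
        push_cast
        calc (∑ j, (z j : ℚ) * (a j i : ℚ)) = ∑ j, (N : ℚ) * (r j * (a j i : ℚ)) := by
              apply Finset.sum_congr rfl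
              intro j _
              rw [hz j]; ring
          _ = (N : ℚ) * ∑ j, r j * (a j i : ℚ) := by rw [Finset.mul_sum]
          _ = 0 := by rw [hrrel i]; ring
      have h0 : (∑ j, z j * a j i) = 0 := by exact_mod_cast this
      simpa [Finset.sum_apply, smul_eq_mul] using h0
    have hzpos : ∀ j ∈ S, 0 < z j := by
      intro j hj
      have : (0:ℚ) < (z j : ℚ) := by
        rw [hz j]
        have := hrpos j hj
        positivity
      exact_mod_cast this
    have hznneg : ∀ j, j ∉ σ → 0 ≤ z j := by
      intro j hjσ
      have : (0:ℚ) ≤ (z j : ℚ) := by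
        rw [hz j]
        have h1 := hrnneg j hjσ
        positivity
      exact_mod_cast this
    set u : Fin n → ℕ := fun j => (z j).toNat with hu
    set v : Fin n → ℕ := fun j => if j ∈ σ then (-(z j)).toNat else 0 with hvdef
    have huv : ∀ j, (u j : ℤ) - (v j : ℤ) = z j := by
      intro j
      by_cases hj : j ∈ σ
      · simp only [hu, hvdef, if_pos hj]
        omega
      · simp only [hu, hvdef, if_neg hj]
        have := hznneg j hj
        omega
    obtain ⟨j₀, hj₀⟩ := hSne
    refine contra u v ?_ ⟨j₀, hSσ j₀ hj₀, ?_⟩ ?_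
    · rw [← hzrel]
      apply Finset.sum_congr rfl
      intro j _
      rw [huv j]
    · have := hzpos j₀ hj₀
      simp only [hu]
      omega
    · intro j hj
      by_contra hjσ
      simp only [hvdef, if_neg hjσ] at hj
      exact hj rfl
  obtain ⟨φ, hφ0, hφpos⟩ := sep_lemma va σ H
  -- the ideal-theoretic statement
  set J : Ideal (MvPolynomial (Fin n) ℂ) :=
    Ideal.span (MvPolynomial.X '' {j : Fin n | j ∉ σ}) with hJ
  have hJle : J ≤ 𝔭 := by
    rw [hJ, Ideal.span_le]
    rintro f ⟨j, hj, rfl⟩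
    exact (hσ' j).1 hj
  have hEq : 𝔭 = I + J := by
    refine le_antisymm ?_ ?_
    swap
    · rw [Submodule.add_eq_sup]
      exact sup_le hsub hJle
    obtain ⟨G, hG, hGhom⟩ := hhom
    conv_lhs => rw [hG]
    rw [Ideal.span_le]
    intro g hg
    have hg𝔭 : g ∈ 𝔭 := by rw [hG]; exact Ideal.subset_span hg
    obtain ⟨b, hb⟩ := hGhom g hg
    set good : Finset (Fin n →₀ ℕ) :=
      g.support.filter (fun e => ∀ j, e j ≠ 0 → j ∈ σ) with hgood
    set bad : Finset (Fin n →₀ ℕ) :=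
      g.support.filter (fun e => ¬ (∀ j, e j ≠ 0 → j ∈ σ)) with hbad
    set gs : MvPolynomial (Fin n) ℂ :=
      ∑ e ∈ good, MvPolynomial.monomial e (MvPolynomial.coeff e g) with hgs
    set bs : MvPolynomial (Fin n) ℂ :=
      ∑ e ∈ bad, MvPolynomial.monomial e (MvPolynomial.coeff e g) with hbs
    have hgsum : g = gs + bs := by
      rw [hgs, hbs, hgood, hbad, Finset.sum_filter_add_sum_filter_not]
      exact MvPolynomial.as_sum g
    have hbadJ : bs ∈ J := by
      rw [hbs]
      apply Submodule.sum_mem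
      intro e he
      rw [hbad, Finset.mem_filter] at he
      push_neg at he
      obtain ⟨j, hj0, hjσ⟩ := he.2
      have hXe : (MvPolynomial.monomial e (MvPolynomial.coeff e g) : MvPolynomial (Fin n) ℂ)
          = MvPolynomial.monomial (e - Finsupp.single j 1) (MvPolynomial.coeff e g)
            * MvPolynomial.X j := by
        rw [MvPolynomial.X, MvPolynomial.monomial_mul, mul_one, tsub_add_cancel_of_le]
        exact Finsupp.single_le_iff.2 (Nat.one_le_iff_ne_zero.2 hj0)
      rw [hXe]
      exact Ideal.mul_mem_left _ _ (Ideal.subset_span ⟨j, hjσ, rfl⟩)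
    rcases Finset.eq_empty_or_nonempty good with hge | ⟨e₀, he₀⟩
    · rw [Submodule.add_eq_sup, SetLike.mem_coe]
      apply Submodule.mem_sup_right
      rw [hgsum, hgs, hge]
      simpa using hbadJ
    have he₀supp : e₀ ∈ g.support := (Finset.mem_filter.1 (hgood ▸ he₀)).1
    have he₀good : ∀ j, e₀ j ≠ 0 → j ∈ σ := (Finset.mem_filter.1 (hgood ▸ he₀)).2
    have hrel : ∀ e ∈ good, (∑ j, (((e : Fin n → ℕ) j : ℤ) - ((e₀ : Fin n → ℕ) j : ℤ)) • a j) = 0 := by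
      intro e he
      have h1 : (∑ j, ((e : Fin n → ℕ) j : ℤ) • a j) = b :=
        hb e (Finset.mem_filter.1 (hgood ▸ he)).1
      have h2 : (∑ j, ((e₀ : Fin n → ℕ) j : ℤ) • a j) = b := hb e₀ he₀supp
      have h3 : (∑ j, (((e : Fin n → ℕ) j : ℤ) - ((e₀ : Fin n → ℕ) j : ℤ)) • a j)
          = (∑ j, ((e : Fin n → ℕ) j : ℤ) • a j) - (∑ j, ((e₀ : Fin n → ℕ) j : ℤ) • a j) := by
        rw [← Finset.sum_sub_distrib]
        apply Finset.sum_congr rfl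
        intro j _
        rw [sub_smul]
      rw [h3, h1, h2, sub_self]
    have hbin : ∀ e ∈ good, ((∏ j, MvPolynomial.X j ^ e j) -
        ((ρ (fun j => ((e : Fin n → ℕ) j : ℤ) - ((e₀ : Fin n → ℕ) j : ℤ)) : ℂ))
          • ∏ j, MvPolynomial.X j ^ e₀ j) ∈ I := by
      intro e he
      exact hI ▸ Ideal.subset_span ⟨⇑e, ⇑e₀, hrel e he, rfl⟩
    set cc : ℂ := ∑ e ∈ good, (MvPolynomial.coeff e g)
        * ((ρ (fun j => ((e : Fin n → ℕ) j : ℤ) - ((e₀ : Fin n → ℕ) j : ℤ)) : ℂ)) with hcc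
    have hmono : ∀ e : Fin n →₀ ℕ,
        (MvPolynomial.monomial e (MvPolynomial.coeff e g) : MvPolynomial (Fin n) ℂ)
          = (MvPolynomial.coeff e g) • ∏ j, MvPolynomial.X j ^ e j := by
      intro e
      rw [prod_X_pow_univ, MvPolynomial.smul_eq_C_mul, MvPolynomial.C_mul_monomial, mul_one]
    have hgoodI : (gs - cc • (∏ j, MvPolynomial.X j ^ e₀ j)) ∈ I := by
      have hrwr : gs - cc • (∏ j, MvPolynomial.X j ^ e₀ j)
          = ∑ e ∈ good, (MvPolynomial.coeff e g) • ((∏ j, MvPolynomial.X j ^ e j) -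
            ((ρ (fun j => ((e : Fin n → ℕ) j : ℤ) - ((e₀ : Fin n → ℕ) j : ℤ)) : ℂ))
              • ∏ j, MvPolynomial.X j ^ e₀ j) := by
        rw [hgs, hcc]
        simp only [smul_sub, Finset.sum_sub_distrib, smul_smul]
        rw [← Finset.sum_smul]
        congr 1
        apply Finset.sum_congr rfl
        intro e _
        rw [hmono e]
      rw [hrwr]
      apply Submodule.sum_mem
      intro e he
      rw [MvPolynomial.smul_eq_C_mul]
      exact Ideal.mul_mem_left _ _ (hbin e he)
    have hccX : cc • (∏ j, MvPolynomial.X j ^ e₀ j : MvPolynomial (Fin n) ℂ) ∈ 𝔭 := by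
      have h1 : cc • (∏ j, MvPolynomial.X j ^ e₀ j : MvPolynomial (Fin n) ℂ)
          = g - bs - (gs - cc • (∏ j, MvPolynomial.X j ^ e₀ j)) := by
        rw [hgsum]; abel
      rw [h1]
      exact 𝔭.sub_mem (𝔭.sub_mem hg𝔭 (hJle hbadJ)) (hsub hgoodI)
    have hcc0 : cc = 0 := by
      by_contra hne
      have := unit_smul_mem 𝔭 hprime cc hne _ hccX
      exact mono_notmem 𝔭 hprime (⇑e₀) (fun j hj => (hσ j).1 (he₀good j hj)) this
    rw [Submodule.add_eq_sup, SetLike.mem_coe, Submodule.mem_sup]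
    refine ⟨gs - cc • (∏ j, MvPolynomial.X j ^ e₀ j), hgoodI, bs, hbadJ, ?_⟩
    rw [hcc0, zero_smul, sub_zero]
    exact hgsum.symm
  exact ⟨σ, φ, hφ0, hφpos, hEq⟩
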